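/- Let a(z), b(z) be logarithmic fields on W such that a is local with b and a is local with itself. Then the three logarithmic fields D_z a(z), b(z) and D_ℓ a(z) are pairwise local. -/
import Mathlib


variable {W : Type*} [AddCommGroup W] [Module ℂ W]

variable (W) in
/-- The data of a logarithmic field `a(z) = Σ_μ Σ_j a_{μ,j} z^{−μ} ℓ^j` on `W`, recorded
pointwise: the value at `(μ, j, w)` is the coefficient of `z^{−μ} ℓ^j` applied to `w`
(here `ℓ` plays the role of `log z`). -/
abbrev LogFieldData : Type _ := ℂ → ℕ → W → W

/-- `a` is a logarithmic field: its coefficients are linear, it is polynomial in `ℓ`, its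
`z`-exponents lie in finitely many cosets of `ℤ` in `ℂ`, and for each vector `w` and each
coset the coefficients `a_{α+k,·}` annihilate `w` for all sufficiently large `k`. -/
def IsLogField (a : LogFieldData W) : Prop :=
  (∀ (μ : ℂ) (j : ℕ), IsLinearMap ℂ (a μ j)) ∧
  (∀ μ : ℂ, ∃ J : ℕ, ∀ j : ℕ, J ≤ j → a μ j = 0) ∧
  (∃ A : Finset ℂ, ∀ μ : ℂ, a μ ≠ 0 → ∃ α ∈ A, ∃ k : ℤ, μ = α + (k : ℂ)) ∧
  (∀ (w : W) (α : ℂ), ∃ N : ℤ, ∀ k : ℤ, N ≤ k → ∀ j : ℕ, a (α + (k : ℂ)) j w = 0)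

/-- `(z₁−z₂)^N [a(z₁), b(z₂)] = 0`, written coefficientwise (coefficient of
`z₁^{−μ₁} ℓ₁^{j₁} z₂^{−μ₂} ℓ₂^{j₂}`), pointwise on `W`. -/
def IsLocalOrd (a b : LogFieldData W) (N : ℕ) : Prop :=
  ∀ (μ₁ : ℂ) (j₁ : ℕ) (μ₂ : ℂ) (j₂ : ℕ) (w : W),
    ∑ i ∈ Finset.range (N + 1), ((-1 : ℤ) ^ i * (N.choose i : ℤ)) •
      (a (μ₁ + ((N : ℂ) - (i : ℂ))) j₁ (b (μ₂ + (i : ℂ)) j₂ w)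
        - b (μ₂ + (i : ℂ)) j₂ (a (μ₁ + ((N : ℂ) - (i : ℂ))) j₁ w)) = 0

/-- Two logarithmic fields are local if `(z₁−z₂)^N [a(z₁), b(z₂)] = 0` for some `N`. -/
def IsLocal (a b : LogFieldData W) : Prop := ∃ N : ℕ, IsLocalOrd a b N

/-- The derivation `D_z = ∂_z + z^{−1} ∂_ℓ`, coefficientwise. -/
noncomputable def Dz (a : LogFieldData W) : LogFieldData W := fun μ j w =>
  ((j : ℂ) + 1) • a (μ - 1) (j + 1) w - (μ - 1) • a (μ - 1) j w

/-- The derivation `D_ℓ = z ∂_z + ∂_ℓ`, coefficientwise. -/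
noncomputable def Dl (a : LogFieldData W) : LogFieldData W := fun μ j w =>
  ((j : ℂ) + 1) • a μ (j + 1) w - μ • a μ j w

/-- The derivation `∂_ℓ`, coefficientwise. -/
noncomputable def Del (a : LogFieldData W) : LogFieldData W := fun μ j w =>
  ((j : ℂ) + 1) • a μ (j + 1) w


private def LFCom (f g : LogFieldData W) (μ₁ : ℂ) (j₁ : ℕ) (μ₂ : ℂ) (j₂ : ℕ) (w : W) : W :=
  f μ₁ j₁ (g μ₂ j₂ w) - g μ₂ j₂ (f μ₁ j₁ w)

private def LFT (f g : LogFieldData W) (N : ℕ) (μ₁ : ℂ) (j₁ : ℕ) (μ₂ : ℂ) (j₂ : ℕ) (w : W) : W :=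
  ∑ i ∈ Finset.range (N + 1), ((-1 : ℂ) ^ i * (N.choose i : ℂ)) •
    LFCom f g (μ₁ + ((N : ℂ) - (i : ℂ))) j₁ (μ₂ + (i : ℂ)) j₂ w

theorem LFCom_Dl_left (f g : LogFieldData W) (hg : ∀ μ j, IsLinearMap ℂ (g μ j))
    (ν : ℂ) (j₁ : ℕ) (μ : ℂ) (j₂ : ℕ) (w : W) :
    LFCom (Dl f) g ν j₁ μ j₂ w
      = ((j₁ : ℂ) + 1) • LFCom f g ν (j₁+1) μ j₂ w - ν • LFCom f g ν j₁ μ j₂ w := by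
  have hsub := (IsLinearMap.mk' _ (hg μ j₂)).map_sub
  have hsm := (IsLinearMap.mk' _ (hg μ j₂)).map_smul
  simp only [IsLinearMap.mk'_apply] at hsub hsm
  simp only [LFCom, Dl, hsub, hsm, smul_sub]
  abel

theorem LFCom_Dl_right (f g : LogFieldData W) (hf : ∀ μ j, IsLinearMap ℂ (f μ j))
    (ν : ℂ) (j₁ : ℕ) (μ : ℂ) (j₂ : ℕ) (w : W) :
    LFCom f (Dl g) ν j₁ μ j₂ w
      = ((j₂ : ℂ) + 1) • LFCom f g ν j₁ μ (j₂+1) w - μ • LFCom f g ν j₁ μ j₂ w := by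
  have hsub := (IsLinearMap.mk' _ (hf ν j₁)).map_sub
  have hsm := (IsLinearMap.mk' _ (hf ν j₁)).map_smul
  simp only [IsLinearMap.mk'_apply] at hsub hsm
  simp only [LFCom, Dl, hsub, hsm, smul_sub]
  abel

theorem LFT_pascal (f g : LogFieldData W) (N : ℕ) (μ₁ : ℂ) (j₁ : ℕ) (μ₂ : ℂ) (j₂ : ℕ) (w : W) :
    LFT f g (N + 1) μ₁ j₁ μ₂ j₂ w
      = LFT f g N (μ₁ + 1) j₁ μ₂ j₂ w - LFT f g N μ₁ j₁ (μ₂ + 1) j₂ w := by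
  unfold LFT
  have key : ∀ i ∈ Finset.range (N + 1 + 1),
      ((-1 : ℂ) ^ i * ((N+1).choose i : ℂ)) •
        LFCom f g (μ₁ + (((N+1 : ℕ):ℂ) - (i : ℂ))) j₁ (μ₂ + (i : ℂ)) j₂ w
      = ((-1 : ℂ) ^ i * (N.choose i : ℂ)) •
          LFCom f g (μ₁ + (((N+1 : ℕ):ℂ) - (i : ℂ))) j₁ (μ₂ + (i : ℂ)) j₂ w
        + ((-1 : ℂ) ^ i * (((N+1).choose i : ℂ) - (N.choose i : ℂ))) •
          LFCom f g (μ₁ + (((N+1 : ℕ):ℂ) - (i : ℂ))) j₁ (μ₂ + (i : ℂ)) j₂ w := by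
    intro i _
    rw [← add_smul]; ring_nf
  rw [Finset.sum_congr rfl key, Finset.sum_add_distrib, sub_eq_add_neg]
  congr 1
  · rw [Finset.sum_range_succ]
    have hz : (N.choose (N+1) : ℂ) = 0 := by
      rw [Nat.choose_eq_zero_of_lt (by omega)]; simp
    rw [hz]
    simp only [mul_zero, zero_smul, add_zero]
    refine Finset.sum_congr rfl fun i hi => ?_
    have harg : μ₁ + (((N+1 : ℕ):ℂ) - (i : ℂ)) = (μ₁ + 1) + ((N : ℂ) - (i : ℂ)) := by
      push_cast; ring
    rw [harg]
  · rw [Finset.sum_range_succ']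
    have h0 : ((-1 : ℂ) ^ 0 * ((((N+1).choose 0 : ℕ) : ℂ) - ((N.choose 0 : ℕ) : ℂ))) = 0 := by
      simp
    rw [h0, zero_smul, add_zero, ← Finset.sum_neg_distrib]
    -- goal: sum = - LFT
    refine Finset.sum_congr rfl fun i hi => ?_
    have hc : ((N+1).choose (i+1) : ℂ) - (N.choose (i+1) : ℂ) = (N.choose i : ℂ) := by
      rw [Nat.choose_succ_succ]; push_cast; ring
    have harg1 : μ₁ + (((N+1 : ℕ):ℂ) - ((i+1 : ℕ) : ℂ)) = μ₁ + ((N : ℂ) - (i : ℂ)) := by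
      push_cast; ring
    have harg2 : μ₂ + ((i+1 : ℕ) : ℂ) = (μ₂ + 1) + (i : ℂ) := by push_cast; ring
    rw [harg1, harg2, hc]
    rw [← neg_smul]
    congr 1
    push_cast; ring

theorem LFT_iw (f g : LogFieldData W) (N : ℕ) (μ₁ : ℂ) (j₁ : ℕ) (μ₂ : ℂ) (j₂ : ℕ) (w : W) :
    ∑ i ∈ Finset.range (N + 2), ((-1 : ℂ) ^ i * ((N+1).choose i : ℂ) * (i : ℂ)) •
      LFCom f g (μ₁ + (((N+1 : ℕ):ℂ) - (i : ℂ))) j₁ (μ₂ + (i : ℂ)) j₂ w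
    = (-(N : ℂ) - 1) • LFT f g N μ₁ j₁ (μ₂ + 1) j₂ w := by
  rw [Finset.sum_range_succ']
  simp only [Nat.cast_zero, mul_zero, zero_smul, add_zero]
  unfold LFT
  rw [Finset.smul_sum]
  refine Finset.sum_congr rfl fun i hi => ?_
  have hc : ((N+1).choose (i+1) : ℂ) * ((i : ℂ) + 1) = ((N : ℂ) + 1) * (N.choose i : ℂ) := by
    have h := (Nat.add_one_mul_choose_eq N i).symm
    exact_mod_cast congrArg (Nat.cast : ℕ → ℂ) h
  have harg1 : μ₁ + (((N+1 : ℕ):ℂ) - ((i+1 : ℕ) : ℂ)) = μ₁ + ((N : ℂ) - (i : ℂ)) := by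
    push_cast; ring
  have harg2 : μ₂ + ((i+1 : ℕ) : ℂ) = (μ₂ + 1) + (i : ℂ) := by push_cast; ring
  rw [harg1, harg2, smul_smul]
  congr 1
  rw [pow_succ]
  push_cast
  linear_combination (-(-1:ℂ)^i) * hc

theorem Com_Dl_left (f g : LogFieldData W) (hg : ∀ μ j, IsLinearMap ℂ (g μ j))
    (ν : ℂ) (j₁ : ℕ) (μ : ℂ) (j₂ : ℕ) (w : W) :
    LFCom (Dl f) g ν j₁ μ j₂ w
      = ((j₁ : ℂ) + 1) • LFCom f g ν (j₁+1) μ j₂ w - ν • LFCom f g ν j₁ μ j₂ w := by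
  have hsub := (IsLinearMap.mk' _ (hg μ j₂)).map_sub
  have hsm := (IsLinearMap.mk' _ (hg μ j₂)).map_smul
  simp only [IsLinearMap.mk'_apply] at hsub hsm
  simp only [LFCom, Dl, hsub, hsm, smul_sub]
  abel

theorem Com_Dl_right (f g : LogFieldData W) (hf : ∀ μ j, IsLinearMap ℂ (f μ j))
    (ν : ℂ) (j₁ : ℕ) (μ : ℂ) (j₂ : ℕ) (w : W) :
    LFCom f (Dl g) ν j₁ μ j₂ w
      = ((j₂ : ℂ) + 1) • LFCom f g ν j₁ μ (j₂+1) w - μ • LFCom f g ν j₁ μ j₂ w := by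
  have hsub := (IsLinearMap.mk' _ (hf ν j₁)).map_sub
  have hsm := (IsLinearMap.mk' _ (hf ν j₁)).map_smul
  simp only [IsLinearMap.mk'_apply] at hsub hsm
  simp only [LFCom, Dl, hsub, hsm, smul_sub]
  abel

theorem LFT_Dl_left (f g : LogFieldData W) (hg : ∀ μ j, IsLinearMap ℂ (g μ j)) (N : ℕ)
    (hT : ∀ (μ₁ : ℂ) (j₁ : ℕ) (μ₂ : ℂ) (j₂ : ℕ) (w : W), LFT f g N μ₁ j₁ μ₂ j₂ w = 0)
    (μ₁ : ℂ) (j₁ : ℕ) (μ₂ : ℂ) (j₂ : ℕ) (w : W) :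
    LFT (Dl f) g (N + 1) μ₁ j₁ μ₂ j₂ w = 0 := by
  have hT1 : ∀ (ν₁ : ℂ) (k₁ : ℕ) (ν₂ : ℂ) (k₂ : ℕ) (v : W), LFT f g (N+1) ν₁ k₁ ν₂ k₂ v = 0 := by
    intro ν₁ k₁ ν₂ k₂ v
    rw [LFT_pascal, hT, hT, sub_zero]
  have key : ∀ i ∈ Finset.range (N + 1 + 1),
      ((-1 : ℂ) ^ i * ((N+1).choose i : ℂ)) •
        LFCom (Dl f) g (μ₁ + (((N+1 : ℕ):ℂ) - (i : ℂ))) j₁ (μ₂ + (i : ℂ)) j₂ w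
      = ((j₁ : ℂ) + 1) • (((-1 : ℂ) ^ i * ((N+1).choose i : ℂ)) •
          LFCom f g (μ₁ + (((N+1 : ℕ):ℂ) - (i : ℂ))) (j₁+1) (μ₂ + (i : ℂ)) j₂ w)
        - (μ₁ + ((N+1 : ℕ):ℂ)) • (((-1 : ℂ) ^ i * ((N+1).choose i : ℂ)) •
          LFCom f g (μ₁ + (((N+1 : ℕ):ℂ) - (i : ℂ))) j₁ (μ₂ + (i : ℂ)) j₂ w)
        + ((-1 : ℂ) ^ i * ((N+1).choose i : ℂ) * (i : ℂ)) •
          LFCom f g (μ₁ + (((N+1 : ℕ):ℂ) - (i : ℂ))) j₁ (μ₂ + (i : ℂ)) j₂ w := by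
    intro i _
    rw [Com_Dl_left f g hg]
    push_cast
    module
  unfold LFT
  rw [Finset.sum_congr rfl key, Finset.sum_add_distrib, Finset.sum_sub_distrib,
    ← Finset.smul_sum, ← Finset.smul_sum]
  have e1 : ∑ i ∈ Finset.range (N + 1 + 1), ((-1 : ℂ) ^ i * ((N+1).choose i : ℂ)) •
      LFCom f g (μ₁ + (((N+1 : ℕ):ℂ) - (i : ℂ))) (j₁+1) (μ₂ + (i : ℂ)) j₂ w
      = LFT f g (N+1) μ₁ (j₁+1) μ₂ j₂ w := rfl
  have e2 : ∑ i ∈ Finset.range (N + 1 + 1), ((-1 : ℂ) ^ i * ((N+1).choose i : ℂ)) •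
      LFCom f g (μ₁ + (((N+1 : ℕ):ℂ) - (i : ℂ))) j₁ (μ₂ + (i : ℂ)) j₂ w
      = LFT f g (N+1) μ₁ j₁ μ₂ j₂ w := rfl
  rw [e1, e2, hT1, hT1, LFT_iw f g N μ₁ j₁ μ₂ j₂ w, hT]
  simp

theorem LFT_Dl_right (f g : LogFieldData W) (hf : ∀ μ j, IsLinearMap ℂ (f μ j)) (N : ℕ)
    (hT : ∀ (μ₁ : ℂ) (j₁ : ℕ) (μ₂ : ℂ) (j₂ : ℕ) (w : W), LFT f g N μ₁ j₁ μ₂ j₂ w = 0)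
    (μ₁ : ℂ) (j₁ : ℕ) (μ₂ : ℂ) (j₂ : ℕ) (w : W) :
    LFT f (Dl g) (N + 1) μ₁ j₁ μ₂ j₂ w = 0 := by
  have hT1 : ∀ (ν₁ : ℂ) (k₁ : ℕ) (ν₂ : ℂ) (k₂ : ℕ) (v : W), LFT f g (N+1) ν₁ k₁ ν₂ k₂ v = 0 := by
    intro ν₁ k₁ ν₂ k₂ v
    rw [LFT_pascal, hT, hT, sub_zero]
  have key : ∀ i ∈ Finset.range (N + 1 + 1),
      ((-1 : ℂ) ^ i * ((N+1).choose i : ℂ)) •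
        LFCom f (Dl g) (μ₁ + (((N+1 : ℕ):ℂ) - (i : ℂ))) j₁ (μ₂ + (i : ℂ)) j₂ w
      = ((j₂ : ℂ) + 1) • (((-1 : ℂ) ^ i * ((N+1).choose i : ℂ)) •
          LFCom f g (μ₁ + (((N+1 : ℕ):ℂ) - (i : ℂ))) j₁ (μ₂ + (i : ℂ)) (j₂+1) w)
        - μ₂ • (((-1 : ℂ) ^ i * ((N+1).choose i : ℂ)) •
          LFCom f g (μ₁ + (((N+1 : ℕ):ℂ) - (i : ℂ))) j₁ (μ₂ + (i : ℂ)) j₂ w)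
        - ((-1 : ℂ) ^ i * ((N+1).choose i : ℂ) * (i : ℂ)) •
          LFCom f g (μ₁ + (((N+1 : ℕ):ℂ) - (i : ℂ))) j₁ (μ₂ + (i : ℂ)) j₂ w := by
    intro i _
    rw [Com_Dl_right f g hf]
    push_cast
    module
  unfold LFT
  rw [Finset.sum_congr rfl key, Finset.sum_sub_distrib, Finset.sum_sub_distrib,
    ← Finset.smul_sum, ← Finset.smul_sum]
  have e1 : ∑ i ∈ Finset.range (N + 1 + 1), ((-1 : ℂ) ^ i * ((N+1).choose i : ℂ)) •
      LFCom f g (μ₁ + (((N+1 : ℕ):ℂ) - (i : ℂ))) j₁ (μ₂ + (i : ℂ)) (j₂+1) w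
      = LFT f g (N+1) μ₁ j₁ μ₂ (j₂+1) w := rfl
  have e2 : ∑ i ∈ Finset.range (N + 1 + 1), ((-1 : ℂ) ^ i * ((N+1).choose i : ℂ)) •
      LFCom f g (μ₁ + (((N+1 : ℕ):ℂ) - (i : ℂ))) j₁ (μ₂ + (i : ℂ)) j₂ w
      = LFT f g (N+1) μ₁ j₁ μ₂ j₂ w := rfl
  rw [e1, e2, hT1, hT1, LFT_iw f g N μ₁ j₁ μ₂ j₂ w, hT]
  simp

theorem LFT_symm (f g : LogFieldData W) (N : ℕ) (μ₁ : ℂ) (j₁ : ℕ) (μ₂ : ℂ) (j₂ : ℕ) (w : W) :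
    LFT g f N μ₁ j₁ μ₂ j₂ w = ((-1 : ℂ) ^ (N+1)) • LFT f g N μ₂ j₂ μ₁ j₁ w := by
  unfold LFT
  rw [Finset.smul_sum, ← Finset.sum_range_reflect]
  refine Finset.sum_congr rfl fun i hi => ?_
  have hiN : i ≤ N := by simpa [Nat.lt_succ_iff] using hi
  have hcast : ((N - i : ℕ) : ℂ) = (N : ℂ) - (i : ℂ) := by
    push_cast [Nat.cast_sub hiN]; ring
  have hincl : N + 1 - 1 - i = N - i := by omega
  rw [hincl, Nat.choose_symm hiN, hcast, smul_smul]
  have harg1 : μ₁ + ((N : ℂ) - ((N : ℂ) - (i : ℂ))) = μ₁ + (i : ℂ) := by ring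
  rw [harg1]
  have hp : ((-1 : ℂ)) ^ (N - i) * (-1 : ℂ) ^ i = (-1 : ℂ) ^ N := by
    rw [← pow_add, Nat.sub_add_cancel hiN]
  have h2 : ((-1 : ℂ)) ^ i * (-1 : ℂ) ^ i = 1 := by
    rw [← pow_add, ← two_mul, pow_mul]; norm_num
  have hne : ((-1 : ℂ)) ^ (N - i) = (-1) ^ N * (-1) ^ i := by
    rw [← hp, mul_assoc, h2, mul_one]
  have hcoef : ((-1 : ℂ) ^ (N - i) * ((N.choose i : ℕ) : ℂ))
      = -((-1 : ℂ) ^ (N + 1) * ((-1 : ℂ) ^ i * ((N.choose i : ℕ) : ℂ))) := by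
    rw [hne, pow_succ]; ring
  rw [hcoef, neg_smul]
  simp only [LFCom, smul_sub]
  abel

theorem LFT_Dz (f g : LogFieldData W) (N : ℕ) (μ₁ : ℂ) (j₁ : ℕ) (μ₂ : ℂ) (j₂ : ℕ) (w : W) :
    LFT (Dz f) g N μ₁ j₁ μ₂ j₂ w = LFT (Dl f) g N (μ₁ - 1) j₁ μ₂ j₂ w := by
  unfold LFT
  refine Finset.sum_congr rfl fun i hi => ?_
  have harg : (μ₁ - 1) + ((N : ℂ) - (i : ℂ)) = (μ₁ + ((N : ℂ) - (i : ℂ))) - 1 := by ring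
  rw [harg]
  rfl

theorem Dl_linear (a : LogFieldData W) (ha : ∀ μ j, IsLinearMap ℂ (a μ j)) :
    ∀ μ j, IsLinearMap ℂ (Dl a μ j) := by
  intro μ j
  constructor
  · intro x y
    simp only [Dl, (ha μ (j+1)).map_add, (ha μ j).map_add, smul_add]
    abel
  · intro c x
    simp only [Dl, (ha μ (j+1)).map_smul, (ha μ j).map_smul]
    module

theorem isLocalOrd_iff (f g : LogFieldData W) (N : ℕ) :
    IsLocalOrd f g N ↔ ∀ (μ₁ : ℂ) (j₁ : ℕ) (μ₂ : ℂ) (j₂ : ℕ) (w : W),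
      LFT f g N μ₁ j₁ μ₂ j₂ w = 0 := by
  have key : ∀ (i : ℕ) (v : W), ((-1 : ℤ) ^ i * (N.choose i : ℤ)) • v
      = ((-1 : ℂ) ^ i * (N.choose i : ℂ)) • v := by
    intro i v
    rw [← Int.cast_smul_eq_zsmul ℂ]
    congr 1
    push_cast
    ring
  unfold IsLocalOrd LFT LFCom
  refine forall_congr' fun μ₁ => forall_congr' fun j₁ => forall_congr' fun μ₂ =>
    forall_congr' fun j₂ => forall_congr' fun w => ?_
  rw [Finset.sum_congr rfl fun i _ => key i _]

/-- If `a`, `b` are logarithmic fields with `a` local to `b` and to itself, then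
`D_z a`, `b` and `D_ℓ a` are pairwise local. -/
theorem Dz_Dl_local (a b : LogFieldData W)
    (ha : IsLogField a) (hb : IsLogField b) (hab : IsLocal a b) (haa : IsLocal a a) :
    IsLocal (Dz a) b ∧ IsLocal (Dz a) (Dl a) ∧ IsLocal b (Dl a) := by
  obtain ⟨N, hN⟩ := hab
  obtain ⟨M, hM⟩ := haa
  rw [isLocalOrd_iff] at hN hM
  have hDla_b : ∀ (μ₁ : ℂ) (j₁ : ℕ) (μ₂ : ℂ) (j₂ : ℕ) (w : W),
      LFT (Dl a) b (N+1) μ₁ j₁ μ₂ j₂ w = 0 := LFT_Dl_left a b hb.1 N hN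
  have hDla_a : ∀ (μ₁ : ℂ) (j₁ : ℕ) (μ₂ : ℂ) (j₂ : ℕ) (w : W),
      LFT (Dl a) a (M+1) μ₁ j₁ μ₂ j₂ w = 0 := LFT_Dl_left a a ha.1 M hM
  have hDla_Dla : ∀ (μ₁ : ℂ) (j₁ : ℕ) (μ₂ : ℂ) (j₂ : ℕ) (w : W),
      LFT (Dl a) (Dl a) (M+1+1) μ₁ j₁ μ₂ j₂ w = 0 :=
    LFT_Dl_right (Dl a) a (Dl_linear a ha.1) (M+1) hDla_a
  refine ⟨⟨N+1, ?_⟩, ⟨M+1+1, ?_⟩, ⟨N+1, ?_⟩⟩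
  · rw [isLocalOrd_iff]
    intro μ₁ j₁ μ₂ j₂ w
    rw [LFT_Dz]
    exact hDla_b _ _ _ _ _
  · rw [isLocalOrd_iff]
    intro μ₁ j₁ μ₂ j₂ w
    rw [LFT_Dz]
    exact hDla_Dla _ _ _ _ _
  · rw [isLocalOrd_iff]
    intro μ₁ j₁ μ₂ j₂ w
    rw [LFT_symm, hDla_b, smul_zero]
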